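/- Let γ ∈ (0, 1) and let λ_0,…,λ_{N−1} be a nonnegative adapted integrable price process. For a dissipative storage device of capacity b ≥ 0 with dynamics z_{k+1} = γ·z_k + u_k, call a plan admissible if z_0 = 0, each u_k is F_k-measurable, and 0 ≤ z_k ≤ b almost surely; its expected revenue is E[−Σ_{k=0}^{N−1} λ_k u_k]. Then the supremum of expected revenue over admissible plans equals b · Σ_{k=0}^{N−2} E[( γ·E[λ_{k+1} | F_k] − λ_k )^+]. (Remark 2 on dissipative storage.) -/

import Mathlib

open MeasureTheory

/-- State of charge of a dissipative storage device with dissipation rate `γ`: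
`z 0 = 0`, `z (k+1) = γ·z k + u k`. -/
def dissState (γ : ℝ) (u : ℕ → ℝ) : ℕ → ℝ
  | 0 => 0
  | k + 1 => γ * dissState γ u k + u k

section AuxDiss

lemma diss_abel (γ : ℝ) (lam u : ℕ → ℝ) (n : ℕ) :
    -∑ k ∈ Finset.range (n + 1), lam k * u k
      = ∑ k ∈ Finset.range n, (γ * lam (k + 1) - lam k) * dissState γ u (k + 1)
        - lam n * dissState γ u (n + 1) := by
  induction n with
  | zero => simp [dissState]
  | succ n ih =>
      rw [Finset.sum_range_succ (f := fun k => lam k * u k), neg_add, ih,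
        Finset.sum_range_succ]
      simp only [dissState]
      ring

lemma sm_dissState {Ω : Type*} {m : MeasurableSpace Ω} (γ : ℝ) (u : ℕ → Ω → ℝ) (n : ℕ)
    (hu : ∀ j, j < n → StronglyMeasurable[m] (u j)) :
    StronglyMeasurable[m] (fun ω => dissState γ (fun j => u j ω) n) := by
  induction n with
  | zero => simpa [dissState] using stronglyMeasurable_const
  | succ n ih =>
      have : (fun ω => dissState γ (fun j => u j ω) (n + 1))
          = fun ω => γ * dissState γ (fun j => u j ω) n + u n ω := rfl
      rw [this]
      exact ((ih fun j hj => hu j (hj.trans (Nat.lt_succ_self n))).const_mul γ).add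
        (hu n (Nat.lt_succ_self n))

variable {Ω : Type*} [m0 : MeasurableSpace Ω] {μ : Measure Ω} [IsProbabilityMeasure μ]
  {m : MeasurableSpace Ω}

lemma integral_mul_condexp_right (hm : m ≤ m0) {f g : Ω → ℝ} {C : ℝ}
    (hf : Integrable f μ) (hg : StronglyMeasurable[m] g)
    (hgb : ∀ᵐ ω ∂μ, ‖g ω‖ ≤ C) :
    ∫ ω, g ω * f ω ∂μ = ∫ ω, g ω * (μ[f|m]) ω ∂μ := by
  have hfg : Integrable (g * f) μ := hf.bdd_mul (hg.mono hm).aestronglyMeasurable hgb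
  calc ∫ ω, g ω * f ω ∂μ = ∫ ω, (μ[g * f|m]) ω ∂μ := (integral_condExp hm).symm
    _ = ∫ ω, g ω * (μ[f|m]) ω ∂μ :=
        integral_congr_ae (condExp_mul_of_stronglyMeasurable_left hg hfg hf)

lemma integral_price_mul_eq (hm : m ≤ m0) {lamk lamk1 g : Ω → ℝ} {C : ℝ} (γ : ℝ)
    (hik : Integrable lamk μ) (hik1 : Integrable lamk1 μ)
    (hg : StronglyMeasurable[m] g) (hgb : ∀ᵐ ω ∂μ, ‖g ω‖ ≤ C) :
    ∫ ω, (γ * lamk1 ω - lamk ω) * g ω ∂μ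
      = ∫ ω, (γ * (μ[lamk1|m]) ω - lamk ω) * g ω ∂μ := by
  have hgaes : AEStronglyMeasurable[m0] g μ := (hg.mono hm).aestronglyMeasurable
  have hmul : ∀ h : Ω → ℝ, Integrable h μ → Integrable (fun ω => g ω * h ω) μ :=
    fun h hh => hh.bdd_mul hgaes hgb
  have e1 : ∀ h : Ω → ℝ, (fun ω => (γ * h ω - lamk ω) * g ω)
      = fun ω => γ * (g ω * h ω) - g ω * lamk ω := by
    intro h; funext ω; ring
  have h1 : ∫ ω, g ω * lamk1 ω ∂μ = ∫ ω, g ω * (μ[lamk1|m]) ω ∂μ :=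
    integral_mul_condexp_right (m0 := m0) hm hik1 hg hgb
  rw [e1, e1, integral_sub ((hmul _ hik1).const_mul γ) (hmul _ hik),
    integral_sub ((hmul _ integrable_condExp).const_mul γ) (hmul _ hik),
    integral_const_mul, integral_const_mul, h1]

end AuxDiss

/-- Dissipative storage (Remark 2).  For `γ ∈ (0,1)`, a nonnegative adapted
integrable price process, and capacity `b ≥ 0`, the supremum of the expected revenue
`E[−∑_{k<N} λ_k u_k]` over all admissible causal plans (`u k` being `F k`-measurable and
`0 ≤ z k ≤ b` a.s., where `z 0 = 0` and `z (k+1) = γ z k + u k`) equals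
`b · ∑_{k=0}^{N−2} E[(γ·E[λ_{k+1} | F_k] − λ_k)⁺]`. -/
theorem dissipative_arbitrage_value {Ω : Type*} [m0 : MeasurableSpace Ω]
    (μ : Measure Ω) [IsProbabilityMeasure μ]
    (N : ℕ) (F : Filtration ℕ m0)
    (γ : ℝ) (hγ0 : 0 < γ) (hγ1 : γ < 1)
    (lam : ℕ → Ω → ℝ)
    (hadapt : ∀ k, k < N → StronglyMeasurable[F k] (lam k))
    (hint : ∀ k, k < N → Integrable (lam k) μ)
    (hpos : ∀ k, k < N → ∀ᵐ ω ∂μ, 0 ≤ lam k ω)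
    (b : ℝ) (hb : 0 ≤ b) :
    sSup { r : ℝ | ∃ u : ℕ → Ω → ℝ,
        (∀ k, k < N → StronglyMeasurable[F k] (u k)) ∧
        (∀ k, k ≤ N → ∀ᵐ ω ∂μ,
          0 ≤ dissState γ (fun j => u j ω) k ∧ dissState γ (fun j => u j ω) k ≤ b) ∧
        r = ∫ ω, -∑ k ∈ Finset.range N, lam k ω * u k ω ∂μ }
      = b * ∑ k ∈ Finset.range (N - 1),
          ∫ ω, max (γ * (μ[lam (k + 1)|F k]) ω - lam k ω) 0 ∂μ := by
  classical
  rcases Nat.eq_zero_or_pos N with hN | hN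
  · subst hN
    have hset : { r : ℝ | ∃ u : ℕ → Ω → ℝ,
        (∀ k, k < 0 → StronglyMeasurable[F k] (u k)) ∧
        (∀ k, k ≤ 0 → ∀ᵐ ω ∂μ,
          0 ≤ dissState γ (fun j => u j ω) k ∧ dissState γ (fun j => u j ω) k ≤ b) ∧
        r = ∫ ω, -∑ k ∈ Finset.range 0, lam k ω * u k ω ∂μ } = {0} := by
      ext r
      constructor
      · rintro ⟨u, -, -, rfl⟩
        simp
      · rintro rfl
        refine ⟨fun _ _ => 0, fun k hk => absurd hk (Nat.not_lt_zero k), ?_, by simp⟩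
        intro k hk
        interval_cases k
        exact Filter.Eventually.of_forall fun ω => by simp [dissState, hb]
    rw [hset]
    simp
  · obtain ⟨n, rfl⟩ : ∃ n, N = n + 1 := ⟨N - 1, (Nat.succ_pred_eq_of_pos hN).symm⟩
    have hred : n + 1 - 1 = n := rfl
    rw [hred]
    set G : ℕ → ℝ := fun k => ∫ ω, max (γ * (μ[lam (k + 1)|F k]) ω - lam k ω) 0 ∂μ with hG
    -- Upper bound
    have hub : ∀ r ∈ { r : ℝ | ∃ u : ℕ → Ω → ℝ,
        (∀ k, k < n + 1 → StronglyMeasurable[F k] (u k)) ∧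
        (∀ k, k ≤ n + 1 → ∀ᵐ ω ∂μ,
          0 ≤ dissState γ (fun j => u j ω) k ∧ dissState γ (fun j => u j ω) k ≤ b) ∧
        r = ∫ ω, -∑ k ∈ Finset.range (n + 1), lam k ω * u k ω ∂μ },
        r ≤ b * ∑ k ∈ Finset.range n, G k := by
      rintro r ⟨u, hu, hz, rfl⟩
      set Z : ℕ → Ω → ℝ := fun k ω => dissState γ (fun j => u j ω) k with hZdef
      have hZsm : ∀ k, k ≤ n → StronglyMeasurable[F k] (Z (k + 1)) := by
        intro k hk
        refine sm_dissState γ u (k + 1) (fun j hj => ?_)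
        exact (hu j (by omega)).mono (F.mono (by omega))
      have hZb : ∀ k, k ≤ n + 1 → ∀ᵐ ω ∂μ, ‖Z k ω‖ ≤ b := by
        intro k hk
        filter_upwards [hz k hk] with ω hω
        rw [Real.norm_eq_abs, abs_le]
        exact ⟨by linarith [hω.1], hω.2⟩
      have hZaes : ∀ k, k ≤ n → AEStronglyMeasurable (Z (k + 1)) μ :=
        fun k hk => ((hZsm k hk).mono (F.le k)).aestronglyMeasurable
      have hmulI : ∀ (w : Ω → ℝ), Integrable w μ → ∀ k, k ≤ n →
          Integrable (fun ω => w ω * Z (k + 1) ω) μ := by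
        intro w hw k hk
        exact (hw.bdd_mul (hZaes k hk) (hZb (k + 1) (by omega))).congr
          (Filter.Eventually.of_forall fun ω => mul_comm _ _)
      have hT : ∀ k, k < n →
          Integrable (fun ω => (γ * lam (k + 1) ω - lam k ω) * Z (k + 1) ω) μ :=
        fun k hk => hmulI _ (((hint (k + 1) (by omega)).const_mul γ).sub (hint k (by omega)))
          k hk.le
      have hlastI : Integrable (fun ω => lam n ω * Z (n + 1) ω) μ :=
        hmulI _ (hint n (by omega)) n le_rfl
      have habel : (fun ω => -∑ k ∈ Finset.range (n + 1), lam k ω * u k ω)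
          = fun ω => (∑ k ∈ Finset.range n,
              (γ * lam (k + 1) ω - lam k ω) * Z (k + 1) ω) - lam n ω * Z (n + 1) ω :=
        funext fun ω => diss_abel γ (fun j => lam j ω) (fun j => u j ω) n
      rw [habel, integral_sub (integrable_finset_sum _ fun k hk =>
        hT k (Finset.mem_range.mp hk)) hlastI,
        integral_finset_sum _ (fun k hk => hT k (Finset.mem_range.mp hk))]
      have hterm : ∀ k ∈ Finset.range n,
          ∫ ω, (γ * lam (k + 1) ω - lam k ω) * Z (k + 1) ω ∂μ ≤ b * G k := by
        intro k hk'
        have hk : k < n := Finset.mem_range.mp hk'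
        have heq := integral_price_mul_eq (m0 := m0) (μ := μ) (F.le k) γ
          (hint k (by omega)) (hint (k + 1) (by omega)) (hZsm k hk.le)
          (hZb (k + 1) (by omega))
        rw [heq]
        have hI1 : Integrable
            (fun ω => (γ * (μ[lam (k + 1)|F k]) ω - lam k ω) * Z (k + 1) ω) μ :=
          hmulI _ ((integrable_condExp.const_mul γ).sub (hint k (by omega))) k hk.le
        have hI2 : Integrable
            (fun ω => max (γ * (μ[lam (k + 1)|F k]) ω - lam k ω) 0 * b) μ :=
          (((integrable_condExp.const_mul γ).sub (hint k (by omega))).pos_part).mul_const b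
        calc ∫ ω, (γ * (μ[lam (k + 1)|F k]) ω - lam k ω) * Z (k + 1) ω ∂μ
            ≤ ∫ ω, max (γ * (μ[lam (k + 1)|F k]) ω - lam k ω) 0 * b ∂μ := by
              refine integral_mono_ae hI1 hI2 ?_
              filter_upwards [hz (k + 1) (by omega)] with ω hω
              calc (γ * (μ[lam (k + 1)|F k]) ω - lam k ω) * Z (k + 1) ω
                  ≤ max (γ * (μ[lam (k + 1)|F k]) ω - lam k ω) 0 * Z (k + 1) ω :=
                    mul_le_mul_of_nonneg_right (le_max_left _ _) hω.1
                _ ≤ max (γ * (μ[lam (k + 1)|F k]) ω - lam k ω) 0 * b :=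
                    mul_le_mul_of_nonneg_left hω.2 (le_max_right _ _)
          _ = b * G k := by rw [integral_mul_const]; ring
      have hlast_nonneg : 0 ≤ ∫ ω, lam n ω * Z (n + 1) ω ∂μ := by
        refine integral_nonneg_of_ae ?_
        filter_upwards [hpos n (by omega), hz (n + 1) le_rfl] with ω h1 h2
        exact mul_nonneg h1 h2.1
      calc (∑ k ∈ Finset.range n, ∫ ω, (γ * lam (k + 1) ω - lam k ω) * Z (k + 1) ω ∂μ)
            - ∫ ω, lam n ω * Z (n + 1) ω ∂μ
          ≤ ∑ k ∈ Finset.range n, (b * G k) := by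
            have := Finset.sum_le_sum hterm
            linarith
        _ = b * ∑ k ∈ Finset.range n, G k := by rw [Finset.mul_sum]
    -- Optimal plan: membership
    set X : ℕ → Ω → ℝ := fun k ω => γ * (μ[lam (k + 1)|F k]) ω - lam k ω with hX
    set Zo : ℕ → Ω → ℝ := fun k ω => match k with
      | 0 => 0
      | j + 1 => if j < n ∧ 0 < X j ω then b else 0 with hZo
    set uo : ℕ → Ω → ℝ := fun k ω => Zo (k + 1) ω - γ * Zo k ω with huo
    have hZo_eq : ∀ ω k, dissState γ (fun j => uo j ω) k = Zo k ω := by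
      intro ω k
      induction k with
      | zero => rfl
      | succ k ih =>
          show γ * dissState γ (fun j => uo j ω) k + uo k ω = Zo (k + 1) ω
          rw [ih]
          show γ * Zo k ω + (Zo (k + 1) ω - γ * Zo k ω) = Zo (k + 1) ω
          ring
    have hZo_bnd : ∀ k ω, 0 ≤ Zo k ω ∧ Zo k ω ≤ b := by
      intro k ω
      cases k with
      | zero => exact ⟨le_rfl, hb⟩
      | succ j =>
          show 0 ≤ (if j < n ∧ 0 < X j ω then b else 0) ∧
            (if j < n ∧ 0 < X j ω then b else 0) ≤ b
          split
          · exact ⟨hb, le_rfl⟩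
          · exact ⟨le_rfl, hb⟩
    have hXsm : ∀ j, j < n → StronglyMeasurable[F j] (X j) :=
      fun j hj => (stronglyMeasurable_condExp.const_mul γ).sub (hadapt j (by omega))
    have hZosm : ∀ j, StronglyMeasurable[F j] (fun ω => Zo (j + 1) ω) := by
      intro j
      by_cases hj : j < n
      · have he : (fun ω => Zo (j + 1) ω) = fun ω => if 0 < X j ω then b else 0 := by
          funext ω
          show (if j < n ∧ 0 < X j ω then b else 0) = _
          simp [hj]
        rw [he]
        have hms : MeasurableSet[F j] {ω | 0 < X j ω} :=
          measurableSet_lt measurable_const (hXsm j hj).measurable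
        exact (Measurable.ite hms measurable_const measurable_const).stronglyMeasurable
      · have he : (fun ω => Zo (j + 1) ω) = fun _ => 0 := by
          funext ω
          show (if j < n ∧ 0 < X j ω then b else 0) = 0
          simp [hj]
        rw [he]
        exact stronglyMeasurable_const
    have hZosm' : ∀ k, StronglyMeasurable[F k] (fun ω => Zo k ω) := by
      intro k
      cases k with
      | zero =>
          have : (fun ω => Zo 0 ω) = fun _ : Ω => (0 : ℝ) := rfl
          rw [this]; exact stronglyMeasurable_const
      | succ j => exact (hZosm j).mono (F.mono (Nat.le_succ j))
    have huosm : ∀ k, k < n + 1 → StronglyMeasurable[F k] (uo k) := by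
      intro k _
      exact (hZosm k).sub ((hZosm' k).const_mul γ)
    have hmem : (b * ∑ k ∈ Finset.range n, G k) ∈ { r : ℝ | ∃ u : ℕ → Ω → ℝ,
        (∀ k, k < n + 1 → StronglyMeasurable[F k] (u k)) ∧
        (∀ k, k ≤ n + 1 → ∀ᵐ ω ∂μ,
          0 ≤ dissState γ (fun j => u j ω) k ∧ dissState γ (fun j => u j ω) k ≤ b) ∧
        r = ∫ ω, -∑ k ∈ Finset.range (n + 1), lam k ω * u k ω ∂μ } := by
      refine ⟨uo, huosm, ?_, ?_⟩
      · intro k _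
        refine Filter.Eventually.of_forall fun ω => ?_
        rw [hZo_eq ω k]
        exact hZo_bnd k ω
      · -- revenue computation
        have hZob : ∀ k, ∀ᵐ ω ∂μ, ‖Zo k ω‖ ≤ b := by
          intro k
          refine Filter.Eventually.of_forall fun ω => ?_
          rw [Real.norm_eq_abs, abs_le]
          exact ⟨by linarith [(hZo_bnd k ω).1], (hZo_bnd k ω).2⟩
        have hZoaes : ∀ k, AEStronglyMeasurable (fun ω => Zo k ω) μ :=
          fun k => ((hZosm' k).mono (F.le k)).aestronglyMeasurable
        have hT : ∀ k, k < n →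
            Integrable (fun ω => (γ * lam (k + 1) ω - lam k ω) * Zo (k + 1) ω) μ := by
          intro k hk
          exact ((((hint (k + 1) (by omega)).const_mul γ).sub
            (hint k (by omega))).bdd_mul (hZoaes (k + 1)) (hZob (k + 1))).congr
            (Filter.Eventually.of_forall fun ω => mul_comm _ _)
        have hZolast : ∀ ω, Zo (n + 1) ω = 0 := by
          intro ω
          show (if n < n ∧ 0 < X n ω then b else 0) = 0
          simp
        have habel : (fun ω => -∑ k ∈ Finset.range (n + 1), lam k ω * uo k ω)
            = fun ω => ∑ k ∈ Finset.range n,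
                (γ * lam (k + 1) ω - lam k ω) * Zo (k + 1) ω := by
          funext ω
          have h := diss_abel γ (fun j => lam j ω) (fun j => uo j ω) n
          simp only [hZo_eq ω] at h
          rw [h, hZolast ω, mul_zero, sub_zero]
        have hterm : ∀ k, k < n →
            ∫ ω, (γ * lam (k + 1) ω - lam k ω) * Zo (k + 1) ω ∂μ = b * G k := by
          intro k hk
          have heq := integral_price_mul_eq (m0 := m0) (μ := μ) (F.le k) γ
            (hint k (by omega)) (hint (k + 1) (by omega)) (hZosm k) (hZob (k + 1))
          rw [heq]
          have hpt : ∀ ω, (γ * (μ[lam (k + 1)|F k]) ω - lam k ω) * Zo (k + 1) ω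
              = max (γ * (μ[lam (k + 1)|F k]) ω - lam k ω) 0 * b := by
            intro ω
            show (X k ω) * (if k < n ∧ 0 < X k ω then b else 0) = max (X k ω) 0 * b
            by_cases h : 0 < X k ω
            · rw [if_pos ⟨hk, h⟩, max_eq_left h.le]
            · rw [max_eq_right (not_lt.mp h), zero_mul]
              simp [h]
          calc ∫ ω, (γ * (μ[lam (k + 1)|F k]) ω - lam k ω) * Zo (k + 1) ω ∂μ
              = ∫ ω, max (γ * (μ[lam (k + 1)|F k]) ω - lam k ω) 0 * b ∂μ := by
                exact integral_congr_ae (Filter.Eventually.of_forall hpt)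
            _ = b * G k := by rw [integral_mul_const]; ring
        rw [habel, integral_finset_sum _ (fun k hk => hT k (Finset.mem_range.mp hk)),
          Finset.sum_congr rfl fun k hk => hterm k (Finset.mem_range.mp hk),
          ← Finset.mul_sum]
    exact le_antisymm (csSup_le ⟨_, hmem⟩ hub) (le_csSup ⟨_, hub⟩ hmem)
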